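/- Let k be a perfect field of prime characteristic p and let f = x₁^{a₁}⋯x_d^{a_d} ∈ k[x₁,…,x_d] be a monomial with every aᵢ > 0. Let a = max{a₁,…,a_d} and e = ⌈log_p(a)⌉ + 1. Then the level of f equals e, and I_e(f^{p^e−1}) is the principal ideal generated by x₁^{a₁−1}⋯x_d^{a_d−1}. -/

import Mathlib

open MvPolynomial

/-- `J^[q]`: the ideal generated by the `q`-th powers of the elements of `J`. -/
def bracketPow {R : Type*} [CommRing R] (q : ℕ) (J : Ideal R) : Ideal R :=
  Ideal.span ((fun a => a ^ q) '' (J : Set R))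

/-- `I_e(g)` (for the prime `p`): the smallest ideal `J` with `g ∈ J^[p^e]`. -/
def rootIdeal {R : Type*} [CommRing R] (p e : ℕ) (g : R) : Ideal R :=
  sInf {J : Ideal R | g ∈ bracketPow (p ^ e) J}

/-- `f` has level `e`: `e` is the least integer `≥ 1` such that
`f^(p^e - p) ∈ (I_e(f^(p^e - 1)))^[p^e]`. -/
def HasLevel {R : Type*} [CommRing R] (p : ℕ) (f : R) (e : ℕ) : Prop :=
  IsLeast {e' : ℕ | 1 ≤ e' ∧
    f ^ (p ^ e' - p) ∈ bracketPow (p ^ e') (rootIdeal p e' (f ^ (p ^ e' - 1)))} e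

namespace Stmt8Aux

/-! ### Natural number arithmetic lemmas -/

lemma natA {q a : ℕ} (ha : 1 ≤ a) (haq : a ≤ q) : (q - 1) * a = q * (a - 1) + (q - a) := by
  obtain ⟨a', rfl⟩ := Nat.exists_eq_add_of_le ha
  obtain ⟨s, rfl⟩ := Nat.exists_eq_add_of_le haq
  rw [show 1 + a' + s - 1 = a' + s by omega, show 1 + a' - 1 = a' by omega,
    show 1 + a' + s - (1 + a') = s by omega]
  ring

lemma natDiv {q a : ℕ} (hq : 0 < q) (ha : 1 ≤ a) (haq : a ≤ q) : (q - 1) * a / q = a - 1 := by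
  rw [natA ha haq, Nat.mul_add_div hq, Nat.div_eq_of_lt (by omega), Nat.add_zero]

lemma natPos {p q a : ℕ} (hp : 0 < p) (ha : 1 ≤ a) (hpa : p * a ≤ q) :
    q * ((q - 1) * a / q) ≤ (q - p) * a := by
  have hq : 0 < q := lt_of_lt_of_le (Nat.mul_pos hp ha) hpa
  have haq : a ≤ q := le_trans (Nat.le_mul_of_pos_left a hp) hpa
  rw [natDiv hq ha haq, Nat.sub_mul, Nat.mul_sub, Nat.mul_one]
  exact Nat.sub_le_sub_left hpa _

lemma natNeg {p q a : ℕ} (hp : 2 ≤ p) (hpq : p ≤ q) (hq : 0 < q) (hlt : q < p * a) :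
    (q - p) * a < q * ((q - 1) * a / q) := by
  have ha1 : 1 ≤ a := by by_contra h; push_neg at h; interval_cases a; omega
  have h3 : p * a ≤ q * a := Nat.mul_le_mul_right a hpq
  rcases le_or_gt a q with haq | hqa
  · rw [natDiv hq ha1 haq, Nat.sub_mul, Nat.mul_sub, Nat.mul_one]
    omega
  · have hdm := Nat.div_add_mod ((q - 1) * a) q
    have hmod : (q - 1) * a % q < q := Nat.mod_lt _ hq
    have e2 : (q - 1) * a = q * a - a := by rw [Nat.sub_mul, Nat.one_mul]
    have h4 : 2 * a ≤ p * a := Nat.mul_le_mul_right a hp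
    rw [Nat.sub_mul, e2]
    rw [e2] at hdm hmod
    generalize q * ((q * a - a) / q) = B at hdm ⊢
    generalize (q * a - a) % q = W at hdm hmod
    generalize p * a = P at h3 h4 ⊢
    generalize q * a = X at h3 hdm ⊢
    omega

lemma nat_cond_iff {q w m : ℕ} (hq : 0 < q) (hw : w < q) :
    q * ((m - w) / q) + w = m ↔ m % q = w := by
  constructor
  · intro h
    rw [← h, Nat.mul_add_mod, Nat.mod_eq_of_lt hw]
  · intro h
    have hwm : w ≤ m := h ▸ Nat.mod_le m q
    have h2 := Nat.div_add_mod m q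
    have hm : m - w = q * (m / q) := by omega
    rw [hm, Nat.mul_div_cancel_left _ hq]
    omega

lemma nat_edip_shift {q w m n : ℕ} (hq : 0 < q) (h : m % q = w) :
    (m + q * n - w) / q = (m - w) / q + n := by
  have hwm : w ≤ m := h ▸ Nat.mod_le m q
  have h2 := Nat.div_add_mod m q
  have hm : m - w = q * (m / q) := by omega
  have hm2 : m + q * n - w = q * (m / q + n) := by rw [Nat.mul_add]; omega
  rw [hm, hm2, Nat.mul_div_cancel_left _ hq, Nat.mul_div_cancel_left _ hq]

/-! ### The Cartier-type projection `Tmap` -/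

variable {σ k : Type*} [CommSemiring k]

/-- pointwise exponent division: `(m - w) / q`. -/
noncomputable def edip (q : ℕ) (w m : σ →₀ ℕ) : σ →₀ ℕ :=
  (m - w).mapRange (· / q) (Nat.zero_div q)

lemma edip_apply (q : ℕ) (w m : σ →₀ ℕ) (i : σ) : edip q w m i = (m i - w i) / q := by
  simp [edip, Finsupp.mapRange_apply, Finsupp.tsub_apply]

open Classical in
/-- The Cartier-type projection extracting the `w`-component. -/
noncomputable def Tmap (q : ℕ) (ι : k →+* k) (w : σ →₀ ℕ) (h : MvPolynomial σ k) :
    MvPolynomial σ k :=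
  (AddMonoidAlgebra.coeff h).sum fun m c => if q • edip q w m + w = m then monomial (edip q w m) (ι c) else 0

lemma Tmap_add (q : ℕ) (ι : k →+* k) (w : σ →₀ ℕ) (h h' : MvPolynomial σ k) :
    Tmap q ι w (h + h') = Tmap q ι w h + Tmap q ι w h' := by
  classical
  unfold Tmap
  rw [AddMonoidAlgebra.coeff_add, Finsupp.sum_add_index']
  · intro m; split <;> simp
  · intro m c c'; split <;> simp [map_add]

lemma Tmap_monomial_of (q : ℕ) (ι : k →+* k) {w m : σ →₀ ℕ} (c : k)
    (h : q • edip q w m + w = m) :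
    Tmap q ι w (monomial m c) = monomial (edip q w m) (ι c) := by
  classical
  unfold Tmap
  rw [MvPolynomial.sum_monomial_eq, if_pos h]
  rw [if_pos h]; simp

lemma Tmap_monomial_of_not (q : ℕ) (ι : k →+* k) {w m : σ →₀ ℕ} (c : k)
    (h : ¬ (q • edip q w m + w = m)) :
    Tmap q ι w (monomial m c) = 0 := by
  classical
  unfold Tmap
  rw [MvPolynomial.sum_monomial_eq, if_neg h]
  rw [if_neg h]

lemma cond_iff {q : ℕ} {w m : σ →₀ ℕ} (hq : 0 < q) (hw : ∀ i, w i < q) :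
    q • edip q w m + w = m ↔ ∀ i, m i % q = w i := by
  rw [Finsupp.ext_iff]
  apply forall_congr'
  intro i
  rw [Finsupp.add_apply, Finsupp.smul_apply, edip_apply, smul_eq_mul]
  exact nat_cond_iff hq (hw i)

lemma cond_shift_iff {q : ℕ} {w m n : σ →₀ ℕ} (hq : 0 < q) (hw : ∀ i, w i < q) :
    q • edip q w (m + q • n) + w = m + q • n ↔ q • edip q w m + w = m := by
  rw [cond_iff hq hw, cond_iff hq hw]
  apply forall_congr'
  intro i
  rw [Finsupp.add_apply, Finsupp.smul_apply, smul_eq_mul, Nat.add_mul_mod_self_left]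

lemma edip_shift {q : ℕ} {w m : σ →₀ ℕ} (n : σ →₀ ℕ) (hq : 0 < q) (hw : ∀ i, w i < q)
    (h : q • edip q w m + w = m) :
    edip q w (m + q • n) = edip q w m + n := by
  ext i
  rw [Finsupp.add_apply, edip_apply, edip_apply, Finsupp.add_apply, Finsupp.smul_apply,
    smul_eq_mul]
  exact nat_edip_shift hq (((cond_iff hq hw).1 h) i)

lemma Tmap_mul_pow {q : ℕ} {ι : k →+* k} {w : σ →₀ ℕ} (hq : 0 < q)
    (hfrob : ∀ x y : MvPolynomial σ k, (x + y) ^ q = x ^ q + y ^ q)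
    (hι : ∀ c b : k, ι (c * b ^ q) = ι c * b) (hw : ∀ i, w i < q) :
    ∀ r g : MvPolynomial σ k, Tmap q ι w (r * g ^ q) = Tmap q ι w r * g := by
  intro r
  induction r using MvPolynomial.induction_on' with
  | monomial m c =>
    intro g
    induction g using MvPolynomial.induction_on' with
    | monomial n b =>
      rw [monomial_pow, monomial_mul]
      by_cases hc : q • edip q w m + w = m
      · rw [Tmap_monomial_of _ _ _ ((cond_shift_iff hq hw).2 hc),
          Tmap_monomial_of _ _ _ hc, edip_shift n hq hw hc, hι, monomial_mul]
      · rw [Tmap_monomial_of_not _ _ _ (fun h => hc ((cond_shift_iff hq hw).1 h)),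
          Tmap_monomial_of_not _ _ _ hc, zero_mul]
    | add g g' ihg ihg' =>
      rw [hfrob, mul_add, Tmap_add, ihg, ihg', mul_add]
  | add r r' ih ih' =>
    intro g
    rw [add_mul, Tmap_add, ih, ih', Tmap_add, add_mul]

lemma edip_base {q : ℕ} (hq : 0 < q) (v w : σ →₀ ℕ) : edip q w (q • v + w) = v := by
  ext i
  rw [edip_apply, Finsupp.add_apply, Finsupp.smul_apply, smul_eq_mul, Nat.add_sub_cancel,
    Nat.mul_div_cancel_left _ hq]

lemma cond_base {q : ℕ} (hq : 0 < q) (v w : σ →₀ ℕ) :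
    q • edip q w (q • v + w) + w = q • v + w := by rw [edip_base hq]

/-! ### Extraction lemma and `rootIdeal` of a monomial -/

lemma mem_of_monomial_mem_bracketPow {k : Type*} [CommRing k] {q : ℕ} (hq : 0 < q)
    {ι : k →+* k}
    (hfrob : ∀ x y : MvPolynomial σ k, (x + y) ^ q = x ^ q + y ^ q)
    (hι : ∀ c b : k, ι (c * b ^ q) = ι c * b) (hι1 : ι 1 = 1)
    {w v : σ →₀ ℕ} (hw : ∀ i, w i < q) {J : Ideal (MvPolynomial σ k)}
    (h : monomial (q • v + w) (1 : k) ∈ bracketPow q J) :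
    monomial v (1 : k) ∈ J := by
  classical
  have h' : monomial (q • v + w) (1 : k) ∈
      Submodule.span (MvPolynomial σ k) ((fun a => a ^ q) '' (J : Set (MvPolynomial σ k))) := h
  rw [Submodule.mem_span_set] at h'
  obtain ⟨c, hsupp, hsum⟩ := h'
  have key : monomial v (1 : k) = Tmap q ι w (monomial (q • v + w) (1 : k)) := by
    rw [Tmap_monomial_of _ _ _ (cond_base hq v w), edip_base hq, hι1]
  rw [key, ← hsum]
  have Tadd : Tmap q ι w (c.sum fun mi r => r • mi) =
      ∑ mi ∈ c.support, Tmap q ι w (c mi • mi) := by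
    rw [Finsupp.sum]
    exact map_sum (AddMonoidHom.mk' (Tmap q ι w) (fun x y => Tmap_add q ι w x y)) (fun mi => c mi • mi) c.support
  rw [Tadd]
  apply Ideal.sum_mem
  intro mi hmi
  obtain ⟨g, hgJ, rfl⟩ := hsupp hmi
  rw [smul_eq_mul, Tmap_mul_pow hq hfrob hι hw]
  exact Ideal.mul_mem_left _ _ hgJ

lemma bracketPow_span_singleton {R : Type*} [CommRing R] (q : ℕ) (g : R) :
    bracketPow q (Ideal.span {g}) = Ideal.span {g ^ q} := by
  apply le_antisymm
  · rw [bracketPow, Ideal.span_le]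
    rintro _ ⟨h, hh, rfl⟩
    rw [SetLike.mem_coe, Ideal.mem_span_singleton] at hh ⊢
    exact pow_dvd_pow_of_dvd hh q
  · rw [Ideal.span_le, Set.singleton_subset_iff]
    exact Ideal.subset_span ⟨g, Ideal.subset_span rfl, rfl⟩

lemma monomial_mem_span_monomial_iff {σ k : Type*} [Field k] {m n : σ →₀ ℕ} :
    (monomial m (1 : k) ∈ Ideal.span {monomial n (1 : k)}) ↔ ∀ i, n i ≤ m i := by
  rw [Ideal.mem_span_singleton, monomial_dvd_monomial]
  simp [Finsupp.le_def, one_ne_zero]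

lemma rootIdeal_monomial {σ k : Type*} [Field k] {p : ℕ} [Fact p.Prime] [CharP k p]
    [PerfectField k] (e : ℕ) (v w : σ →₀ ℕ) (hw : ∀ i, w i < p ^ e) :
    rootIdeal p e (monomial (p ^ e • v + w) (1 : k)) = Ideal.span {monomial v 1} := by
  have hq : 0 < p ^ e := Nat.pow_pos (n := e) (Fact.out : p.Prime).pos
  set ι : k →+* k := ((iterateFrobeniusEquiv k p e).symm : k ≃+* k).toRingHom with hιdef
  have hι : ∀ c b : k, ι (c * b ^ p ^ e) = ι c * b := by
    intro c b
    rw [map_mul]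
    congr 1
    show (iterateFrobeniusEquiv k p e).symm (b ^ p ^ e) = b
    rw [show b ^ p ^ e = iterateFrobeniusEquiv k p e b from rfl, RingEquiv.symm_apply_apply]
  have hfrob : ∀ x y : MvPolynomial σ k, (x + y) ^ p ^ e = x ^ p ^ e + y ^ p ^ e :=
    fun x y => add_pow_char_pow x y p e
  apply le_antisymm
  · apply sInf_le
    show monomial (p ^ e • v + w) (1 : k) ∈ bracketPow (p ^ e) (Ideal.span {monomial v 1})
    rw [bracketPow_span_singleton, monomial_pow, one_pow, Ideal.mem_span_singleton]
    refine monomial_dvd_monomial.2 ⟨Or.inr (Finsupp.le_def.2 fun i => ?_), one_dvd _⟩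
    rw [Finsupp.add_apply]
    exact Nat.le_add_right _ _
  · apply le_sInf
    intro J hJ
    rw [Ideal.span_le, Set.singleton_subset_iff, SetLike.mem_coe]
    exact mem_of_monomial_mem_bracketPow hq hfrob hι (map_one ι) hw hJ

end Stmt8Aux

open Stmt8Aux in
/-- For a monomial `f = x₁^{a₁}⋯x_d^{a_d}` with all `aᵢ > 0` and `a = max aᵢ`, the level of
`f` is `e = ⌈log_p a⌉ + 1`, and `I_e(f^(p^e - 1)) = (x₁^{a₁-1}⋯x_d^{a_d-1})`. -/
theorem stmt_8 (p : ℕ) [Fact p.Prime] (k : Type*) [Field k] [CharP k p] [PerfectField k]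
    (d : ℕ) (a : Fin d → ℕ) (ha : ∀ i, 0 < a i)
    (e : ℕ) (he : e = Nat.clog p (Finset.univ.sup a) + 1)
    (f : MvPolynomial (Fin d) k)
    (hf : f = monomial (Finsupp.equivFunOnFinite.symm a) 1) :
    HasLevel p f e ∧
    rootIdeal p e (f ^ (p ^ e - 1)) =
      Ideal.span {monomial (Finsupp.equivFunOnFinite.symm fun i => a i - 1) 1} := by
  have hp : p.Prime := Fact.out
  have hp2 : 2 ≤ p := hp.two_le
  have hfpow : ∀ n : ℕ, f ^ n = monomial (n • (Finsupp.equivFunOnFinite.symm a)) (1 : k) := by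
    intro n; rw [hf, monomial_pow, one_pow]
  -- the rootIdeal of `f ^ (p ^ e' - 1)` for arbitrary `e'`
  have hroot : ∀ e' : ℕ, rootIdeal p e' (f ^ (p ^ e' - 1)) =
      Ideal.span {monomial (Finsupp.equivFunOnFinite.symm
        fun i => (p ^ e' - 1) * a i / p ^ e') (1 : k)} := by
    intro e'
    have hq : 0 < p ^ e' := Nat.pow_pos (n := e') hp.pos
    rw [hfpow]
    have hdecomp : (p ^ e' - 1) • (Finsupp.equivFunOnFinite.symm a) =
        p ^ e' • (Finsupp.equivFunOnFinite.symm fun i => (p ^ e' - 1) * a i / p ^ e') +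
          (Finsupp.equivFunOnFinite.symm fun i => (p ^ e' - 1) * a i % p ^ e') := by
      ext i
      simp only [Finsupp.add_apply, Finsupp.smul_apply,
        Finsupp.equivFunOnFinite_symm_apply_apply, smul_eq_mul]
      exact (Nat.div_add_mod _ _).symm
    rw [hdecomp]
    exact rootIdeal_monomial e' _ _ (fun i => by
      rw [Finsupp.equivFunOnFinite_symm_apply_apply]; exact Nat.mod_lt _ hq)
  -- membership characterization
  have hmem : ∀ e' : ℕ,
      (f ^ (p ^ e' - p) ∈ bracketPow (p ^ e') (rootIdeal p e' (f ^ (p ^ e' - 1)))) ↔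
        ∀ i, p ^ e' * ((p ^ e' - 1) * a i / p ^ e') ≤ (p ^ e' - p) * a i := by
    intro e'
    rw [hroot, bracketPow_span_singleton, monomial_pow, one_pow, hfpow,
      monomial_mem_span_monomial_iff]
    apply forall_congr'
    intro i
    simp only [Finsupp.smul_apply, Finsupp.equivFunOnFinite_symm_apply_apply, smul_eq_mul]
  have hsup : ∀ i, a i ≤ Finset.univ.sup a := fun i => Finset.le_sup (Finset.mem_univ i)
  have hpa : ∀ i, p * a i ≤ p ^ e := by
    intro i
    have h1 : a i ≤ p ^ (e - 1) := by
      rw [he, Nat.add_sub_cancel]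
      exact le_trans (hsup i) (Nat.le_pow_clog hp.one_lt _)
    calc p * a i ≤ p * p ^ (e - 1) := Nat.mul_le_mul_left p h1
      _ = p ^ e := by
          rw [← pow_succ']
          congr 1
          omega
  constructor
  · constructor
    · refine ⟨by omega, ?_⟩
      rw [hmem]
      intro i
      exact natPos hp.pos (ha i) (hpa i)
    · rintro e' ⟨he'1, he'mem⟩
      by_contra hcon
      push_neg at hcon
      have hee : e' ≤ Nat.clog p (Finset.univ.sup a) := by omega
      have hclog : ¬ (Nat.clog p (Finset.univ.sup a) ≤ e' - 1) := by omega
      have hAlt : p ^ (e' - 1) < Finset.univ.sup a := by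
        by_contra hle
        push_neg at hle
        exact hclog ((Nat.clog_le_iff_le_pow hp.one_lt).2 hle)
      obtain ⟨i₀, -, hi₀⟩ := Finset.exists_mem_eq_sup (Finset.univ : Finset (Fin d))
        (by
          rcases (Finset.univ : Finset (Fin d)).eq_empty_or_nonempty with hu | hu
          · rw [hu, Finset.sup_empty] at hAlt
            exact absurd hAlt (not_lt.2 bot_le)
          · exact hu) a
      rw [hmem] at he'mem
      have hkey := he'mem i₀
      have hqlt : p ^ e' < p * a i₀ := by
        have : p ^ e' = p * p ^ (e' - 1) := by
          rw [← pow_succ']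
          congr 1
          omega
        rw [this]
        exact (Nat.mul_lt_mul_left hp.pos).2 (hi₀ ▸ hAlt)
      exact absurd hkey (Nat.not_le.2 (natNeg hp2 (Nat.le_self_pow (by omega) p)
        (Nat.pow_pos (n := e') hp.pos) hqlt))
  · have hfun : (fun i => (p ^ e - 1) * a i / p ^ e) = fun i => a i - 1 := by
      funext i
      exact natDiv (Nat.pow_pos (n := e) hp.pos) (ha i)
        (le_trans (le_trans (hsup i) (Nat.le_pow_clog hp.one_lt _))
          (by rw [he]; exact Nat.pow_le_pow_right hp.pos (by omega)))
    rw [hroot e, hfun]
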